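/- Let t ≥ 3, k ≥ 3, and let 0 < a ≤ b be integers. The number of induced subgraphs of GA(t,k)' isomorphic to the complete bipartite graph K_{a,b} equals n·C(k-2, a+b-1) if a ≠ b, and (n/2)·C(k-2, a+b-1) if a = b, where n = t(k-1)+2 and C denotes the binomial coefficient. -/

import Mathlib

open Finset



/-- `GA(t,k)'`: the Generalized Andrásfai graph `GA(t,k)` on `ℤ/(t(k-1)+2)ℤ` with the
edges of the exterior Hamiltonian cycle removed: vertices `i < j` are adjacent iff
`j - i ≡ 1 (mod t)` and `j - i ∉ {1, n-1}` where `n = t(k-1)+2`. -/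
def GA' (t k : ℕ) : SimpleGraph (ZMod (t * (k - 1) + 2)) :=
  SimpleGraph.fromRel fun x y =>
    (y - x).val % t = 1 % t ∧ (y - x).val ≠ 1 ∧ (y - x).val ≠ t * (k - 1) + 1

section aux
variable {t k : ℕ}

local notation "N" => t * (k - 1) + 2

instance : NeZero (t * (k - 1) + 2) := ⟨by omega⟩

lemma mt_lt (hk : 3 ≤ k) {m : ℕ} (hm : m ≤ k - 2) : m * t + 1 < N := by
  have h1 : m * t ≤ (k-2) * t := Nat.mul_le_mul_right _ hm
  have h2 : (k-2) * t ≤ (k-1) * t := Nat.mul_le_mul_right _ (by omega)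
  have h3 : (k-1) * t = t * (k-1) := Nat.mul_comm _ _
  omega

lemma dt_lt (hk : 3 ≤ k) {d : ℕ} (hd : d ≤ k - 2) : d * t < N := by
  have := mt_lt (t := t) hk hd; omega

lemma cast_inj_n {p q : ℕ} (hp : p < N) (hq : q < N) (h : (p : ZMod N) = (q : ZMod N)) :
    p = q := by
  have h1 := ZMod.val_cast_of_lt hp
  have h2 := ZMod.val_cast_of_lt hq
  rw [h, h2] at h1
  omega

/-- helper: reconstruct the relation from an explicit difference -/
lemma rel_of (ht : 3 ≤ t) (hk : 3 ≤ k) {m : ℕ} (h1 : 1 ≤ m) (h2 : m ≤ k - 2) (x : ZMod N) :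
    ((x + ((m * t + 1 : ℕ) : ZMod N)) - x).val % t = 1 % t ∧
    ((x + ((m * t + 1 : ℕ) : ZMod N)) - x).val ≠ 1 ∧
    ((x + ((m * t + 1 : ℕ) : ZMod N)) - x).val ≠ t * (k - 1) + 1 := by
  have hv : ((x + ((m * t + 1 : ℕ) : ZMod N)) - x) = ((m * t + 1 : ℕ) : ZMod N) := by ring
  rw [hv, ZMod.val_cast_of_lt (mt_lt hk h2)]
  refine ⟨?_, ?_, ?_⟩
  · rw [Nat.mul_comm, Nat.mul_add_mod]
  · have : 1 ≤ m * t := Nat.one_le_iff_ne_zero.mpr (by positivity)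
    omega
  · intro hcon
    have : m * t ≤ (k-2) * t := Nat.mul_le_mul_right _ h2
    have h3 : (k-2) * t ≤ (k-1) * t := Nat.mul_le_mul_right _ (by omega)
    have h4 : (k-1) * t = t * (k-1) := Nat.mul_comm _ _
    have h5 : (k-2) * t + t = (k-1) * t := by
      have : (k - 2 + 1) * t = (k-2)*t + t := by ring
      rw [← this]; congr 1; omega
    omega

lemma GA'_adj (ht : 3 ≤ t) (hk : 3 ≤ k) (x y : ZMod N) :
    (GA' t k).Adj x y ↔ ∃ m, 1 ≤ m ∧ m ≤ k - 2 ∧ y = x + ((m * t + 1 : ℕ) : ZMod N) := by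
  rw [GA', SimpleGraph.fromRel_adj]
  constructor
  · rintro ⟨hne, h | h⟩
    · obtain ⟨h1, h2, h3⟩ := h
      have hdn : (y - x).val < N := ZMod.val_lt _
      have hd0 : (y - x).val ≠ 0 := by
        rw [Ne, ZMod.val_eq_zero, sub_eq_zero]
        intro h'; exact hne h'.symm
      set d := (y - x).val with hd
      have h1' : d % t = 1 := by rwa [Nat.mod_eq_of_lt (by omega : 1 < t)] at h1
      refine ⟨d / t, ?_, ?_, ?_⟩
      · rcases Nat.eq_zero_or_pos (d / t) with h | h
        · exfalso; have hdm := Nat.div_add_mod d t; rw [h] at hdm; simp at hdm; omega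
        · omega
      · have hdecomp := Nat.div_add_mod d t
        by_contra hcon
        push_neg at hcon
        have : k - 1 ≤ d / t := by omega
        have : (k-1) * t ≤ (d/t) * t := Nat.mul_le_mul_right _ this
        have h4 : (k-1) * t = t * (k-1) := Nat.mul_comm _ _
        have : t * (d/t) = (d/t) * t := Nat.mul_comm _ _
        omega
      · have hdecomp := Nat.div_add_mod d t
        have : d / t * t + 1 = d := by
          have : t * (d/t) = (d/t) * t := Nat.mul_comm _ _
          omega
        rw [this, hd]
        have h' : ((y - x).val : ZMod N) = y - x := ZMod.natCast_rightInverse.rightInverse _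
        rw [h']; ring
    · obtain ⟨h1, h2, h3⟩ := h
      have hdn : (x - y).val < N := ZMod.val_lt _
      have hd0 : (x - y).val ≠ 0 := by
        rw [Ne, ZMod.val_eq_zero, sub_eq_zero]
        exact hne
      set d := (x - y).val with hd
      have h1' : d % t = 1 := by rwa [Nat.mod_eq_of_lt (by omega : 1 < t)] at h1
      have hdecomp := Nat.div_add_mod d t
      set m' := d / t with hm'
      have hm'ub : m' ≤ k - 2 := by
        by_contra hcon
        push_neg at hcon
        have : k - 1 ≤ m' := by omega
        have : (k-1) * t ≤ m' * t := Nat.mul_le_mul_right _ this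
        have h4 : (k-1) * t = t * (k-1) := Nat.mul_comm _ _
        have : t * m' = m' * t := Nat.mul_comm _ _
        omega
      have hm'1 : 1 ≤ m' := by
        rcases Nat.eq_zero_or_pos m' with h | h
        · exfalso; rw [h] at hdecomp; simp at hdecomp; omega
        · omega
      refine ⟨k - 1 - m', by omega, by omega, ?_⟩
      have hsum : (m' * t + 1) + ((k - 1 - m') * t + 1) = N := by
        have hadd : (m' + (k - 1 - m')) * t = m' * t + (k-1-m') * t := Nat.add_mul _ _ _
        have h5 : m' + (k-1-m') = k - 1 := by omega
        rw [h5] at hadd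
        have h6 : (k-1) * t = t * (k-1) := Nat.mul_comm _ _
        omega
      have hx : x = y + ((m' * t + 1 : ℕ) : ZMod N) := by
        have : d * 1 = d := by omega
        have h' : ((x - y).val : ZMod N) = x - y := ZMod.natCast_rightInverse.rightInverse _
        have hd' : ((m' * t + 1 : ℕ) : ZMod N) = x - y := by
          rw [← h']; congr 1
          have : t * m' = m' * t := Nat.mul_comm _ _
          omega
        rw [hd']; ring
      rw [hx]
      have : (((m' * t + 1 : ℕ) : ZMod N)) + (((k - 1 - m') * t + 1 : ℕ) : ZMod N) = 0 := by
        rw [← Nat.cast_add, hsum, ZMod.natCast_self]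
      rw [add_assoc, this, add_zero]
  · rintro ⟨m, h1, h2, rfl⟩
    constructor
    · intro h'
      have : ((m * t + 1 : ℕ) : ZMod N) = 0 := by
        have := h'.symm
        rwa [left_eq_add] at h'
      have := cast_inj_n (mt_lt hk h2) (by omega : (0:ℕ) < N) (by rw [this]; simp)
      omega
    · exact Or.inl (rel_of ht hk h1 h2 x)

lemma GA'_nonadj (ht : 3 ≤ t) (hk : 3 ≤ k) {d : ℕ} (hd : d ≤ k - 2) (x : ZMod N) :
    ¬ (GA' t k).Adj x (x + ((d * t : ℕ) : ZMod N)) := by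
  rw [GA'_adj ht hk]
  rintro ⟨m, h1, h2, he⟩
  have hc : ((d * t : ℕ) : ZMod N) = ((m * t + 1 : ℕ) : ZMod N) := by
    rwa [add_right_inj] at he
  have heq := cast_inj_n (dt_lt hk hd) (mt_lt hk h2) hc
  have h3 : (m * t + 1) % t = 0 := by rw [← heq]; exact Nat.mul_mod_left _ _
  have h4 : (m * t + 1) % t = 1 % t := by rw [Nat.mul_comm, Nat.mul_add_mod]
  have h5 : (1 : ℕ) % t = 1 := Nat.mod_eq_of_lt (by omega)
  omega

/-- cast injectivity below `2N` for naturals with equal residue mod `t` -/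
lemma cast_inj_2n (ht : 3 ≤ t) {p q : ℕ} (hp : p < 2 * N) (hq : q < 2 * N)
    (hm : p % t = q % t) (h : (p : ZMod N) = (q : ZMod N)) : p = q := by
  have hmod : Nat.ModEq N p q := (ZMod.natCast_eq_natCast_iff _ _ _).mp h
  have hNt : N % t = 2 % t := Nat.mul_add_mod _ _ _
  have h2t : (2:ℕ) % t = 2 := Nat.mod_eq_of_lt (by omega)
  have key : ∀ p' q' : ℕ, p' ≤ q' → q' < 2 * N → p' % t = q' % t →
      Nat.ModEq N p' q' → p' = q' := by
    intro p' q' hle hq' hm' hmod'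
    have hdvd : N ∣ q' - p' := (Nat.modEq_iff_dvd' hle).mp hmod'
    obtain ⟨c, hc⟩ := hdvd
    have hc1 : c ≤ 1 := by
      by_contra hcon
      push_neg at hcon
      have : 2 * N ≤ N * c := by
        calc 2 * N = N * 2 := by ring
        _ ≤ N * c := Nat.mul_le_mul_left _ (by omega)
      omega
    interval_cases c
    · omega
    · exfalso
      have hq'' : q' = p' + N := by omega
      have h5 : q' % t = (p' % t + N % t) % t := by rw [hq'', Nat.add_mod]
      rw [hNt, h2t, hm'] at h5
      have hrt : q' % t < t := Nat.mod_lt _ (by omega)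
      rcases Nat.lt_or_ge (q' % t + 2) t with hlt | hge
      · rw [Nat.mod_eq_of_lt hlt] at h5; omega
      · have h6 : (q' % t + 2) % t = q' % t + 2 - t := by
          rw [Nat.mod_eq_sub_mod hge, Nat.mod_eq_of_lt (by omega)]
        omega
  rcases Nat.le_total p q with hle | hle
  · exact key p q hle hq hm hmod
  · exact (key q p hle hp hm.symm hmod.symm).symm

/-- level of an edge -/
def EM (t : ℕ) {n : ℕ} (u v : ZMod n) : ℕ := (v - u).val / t

lemma EM_spec (ht : 3 ≤ t) (hk : 3 ≤ k) {u v : ZMod N} (h : (GA' t k).Adj u v) :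
    1 ≤ EM t u v ∧ EM t u v ≤ k - 2 ∧ v = u + ((EM t u v * t + 1 : ℕ) : ZMod N) := by
  rw [GA'_adj ht hk] at h
  obtain ⟨m, h1, h2, rfl⟩ := h
  have hv : (u + ((m * t + 1 : ℕ) : ZMod N) - u) = ((m * t + 1 : ℕ) : ZMod N) := by ring
  have hval : (u + ((m * t + 1 : ℕ) : ZMod N) - u).val = m * t + 1 := by
    rw [hv, ZMod.val_cast_of_lt (mt_lt hk h2)]
  have hEM : EM t u (u + ((m * t + 1 : ℕ) : ZMod N)) = m := by
    rw [EM, hval, Nat.mul_comm m t, Nat.mul_add_div (by omega : 0 < t),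
      Nat.div_eq_of_lt (by omega : 1 < t), Nat.add_zero]
  rw [hEM]
  exact ⟨h1, h2, rfl⟩

variable (t k) in
/-- parametrization map -/
def phi (x : ZMod N) (I J : Finset ℕ) : Finset (ZMod N) :=
  I.image (fun c => x + ((c * t : ℕ) : ZMod N)) ∪ J.image (fun c => x + ((c * t + 1 : ℕ) : ZMod N))

variable (k) in
/-- the index-pair domain -/
def DD (a b : ℕ) : Finset (Finset ℕ × Finset ℕ) :=
  (((Icc 0 (k-2)).powersetCard a) ×ˢ ((Icc 1 (k-2)).powersetCard b)).filter
    (fun p => 0 ∈ p.1 ∧ ∀ i ∈ p.1, ∀ j ∈ p.2, i < j)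

lemma mem_DD {a b : ℕ} {I J : Finset ℕ} :
    (I, J) ∈ DD k a b ↔ (I ⊆ Icc 0 (k-2) ∧ I.card = a) ∧ (J ⊆ Icc 1 (k-2) ∧ J.card = b)
      ∧ 0 ∈ I ∧ ∀ i ∈ I, ∀ j ∈ J, i < j := by
  simp only [DD, Finset.mem_filter, Finset.mem_product, Finset.mem_powersetCard]
  tauto

section rep
variable {I J : Finset ℕ}

lemma injI {x : ZMod N} (ht : 3 ≤ t) (hk : 3 ≤ k) (hI : ∀ c ∈ I, c ≤ k - 2) :
    Set.InjOn (fun c => x + ((c * t : ℕ) : ZMod N)) ↑I := by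
  intro c hc c' hc' h
  simp only at h
  rw [add_right_inj] at h
  have := cast_inj_n (dt_lt hk (hI c hc)) (dt_lt hk (hI c' hc')) h
  exact Nat.eq_of_mul_eq_mul_right (by omega) this

lemma injJ {x : ZMod N} (ht : 3 ≤ t) (hk : 3 ≤ k) (hJ : ∀ c ∈ J, c ≤ k - 2) :
    Set.InjOn (fun c => x + ((c * t + 1 : ℕ) : ZMod N)) ↑J := by
  intro c hc c' hc' h
  simp only at h
  rw [add_right_inj] at h
  have := cast_inj_n (mt_lt hk (hJ c hc)) (mt_lt hk (hJ c' hc')) h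
  have : c * t = c' * t := by omega
  exact Nat.eq_of_mul_eq_mul_right (by omega) this

lemma AB_disj {x : ZMod N} (ht : 3 ≤ t) (hk : 3 ≤ k) (hI : ∀ c ∈ I, c ≤ k - 2) (hJ : ∀ c ∈ J, c ≤ k - 2) :
    Disjoint (I.image (fun c => x + ((c * t : ℕ) : ZMod N)))
      (J.image (fun c => x + ((c * t + 1 : ℕ) : ZMod N))) := by
  rw [Finset.disjoint_left]
  rintro w hw hw'
  simp only [Finset.mem_image] at hw hw'
  obtain ⟨c, hc, rfl⟩ := hw
  obtain ⟨c', hc', he⟩ := hw'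
  rw [add_right_inj] at he
  have := cast_inj_n (mt_lt hk (hJ c' hc')) (dt_lt hk (hI c hc)) he
  have h3 : (c' * t + 1) % t = 0 := by rw [this]; exact Nat.mul_mod_left _ _
  have h4 : (c' * t + 1) % t = 1 % t := by rw [Nat.mul_comm, Nat.mul_add_mod]
  have h5 : (1 : ℕ) % t = 1 := Nat.mod_eq_of_lt (by omega)
  omega

lemma shift_eq {x : ZMod N} {c c' : ℕ} (hcc : c ≤ c') : x + ((c * t : ℕ) : ZMod N) + (((c' - c) * t : ℕ) : ZMod N)
    = x + ((c' * t : ℕ) : ZMod N) := by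
  rw [add_assoc, ← Nat.cast_add]
  congr 2
  have : (c' - c) * t = c' * t - c * t := Nat.sub_mul _ _ _
  have : c * t ≤ c' * t := Nat.mul_le_mul_right _ hcc
  omega

lemma nonadjA {x : ZMod N} (ht : 3 ≤ t) (hk : 3 ≤ k) (hI : ∀ c ∈ I, c ≤ k - 2) :
    ∀ u ∈ I.image (fun c => x + ((c * t : ℕ) : ZMod N)),
    ∀ u' ∈ I.image (fun c => x + ((c * t : ℕ) : ZMod N)), ¬ (GA' t k).Adj u u' := by
  have key : ∀ c ∈ I, ∀ c' ∈ I, c ≤ c' →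
      ¬ (GA' t k).Adj (x + ((c * t : ℕ) : ZMod N)) (x + ((c' * t : ℕ) : ZMod N)) := by
    intro c hc c' hc' hcc hadj
    rw [← shift_eq hcc] at hadj
    have := hI c' hc'
    exact GA'_nonadj ht hk (by omega : c' - c ≤ k - 2) _ hadj
  rintro u hu u' hu'
  simp only [Finset.mem_image] at hu hu'
  obtain ⟨c, hc, rfl⟩ := hu
  obtain ⟨c', hc', rfl⟩ := hu'
  rcases Nat.le_total c c' with h | h
  · exact key c hc c' hc' h
  · intro hadj; exact key c' hc' c hc h hadj.symm

lemma nonadjB {x : ZMod N} (ht : 3 ≤ t) (hk : 3 ≤ k) (hJ : ∀ c ∈ J, c ≤ k - 2) :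
    ∀ u ∈ J.image (fun c => x + ((c * t + 1 : ℕ) : ZMod N)),
    ∀ u' ∈ J.image (fun c => x + ((c * t + 1 : ℕ) : ZMod N)), ¬ (GA' t k).Adj u u' := by
  have he : ∀ c : ℕ, x + ((c * t + 1 : ℕ) : ZMod N) = (x + ((1:ℕ) : ZMod N)) + ((c * t : ℕ) : ZMod N) := by
    intro c; push_cast; ring
  intro u hu u' hu'
  simp only [Finset.mem_image] at hu hu'
  obtain ⟨c, hc, rfl⟩ := hu
  obtain ⟨c', hc', rfl⟩ := hu'
  rw [he c, he c']
  exact nonadjA ht hk hJ _ (Finset.mem_image_of_mem _ hc) _ (Finset.mem_image_of_mem _ hc')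

lemma adjAB {x : ZMod N} (ht : 3 ≤ t) (hk : 3 ≤ k) (hJ : ∀ c ∈ J, c ≤ k - 2)
    (hcross : ∀ i ∈ I, ∀ j ∈ J, i < j) :
    ∀ u ∈ I.image (fun c => x + ((c * t : ℕ) : ZMod N)),
    ∀ v ∈ J.image (fun c => x + ((c * t + 1 : ℕ) : ZMod N)), (GA' t k).Adj u v := by
  intro u hu v hv
  simp only [Finset.mem_image] at hu hv
  obtain ⟨c, hc, rfl⟩ := hu
  obtain ⟨c', hc', rfl⟩ := hv
  rw [GA'_adj ht hk]
  refine ⟨c' - c, by have := hcross c hc c' hc'; omega, by have := hJ c' hc'; omega, ?_⟩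
  have hcc : c ≤ c' := le_of_lt (hcross c hc c' hc')
  rw [add_assoc, ← Nat.cast_add]
  congr 2
  have h1 : (c' - c) * t = c' * t - c * t := Nat.sub_mul _ _ _
  have h2 : c * t ≤ c' * t := Nat.mul_le_mul_right _ hcc
  omega

lemma phi_card {a b : ℕ} (ht : 3 ≤ t) (hk : 3 ≤ k) (x : ZMod N) {I J : Finset ℕ}
    (h : (I, J) ∈ DD k a b) : (phi t k x I J).card = a + b := by
  rw [mem_DD] at h
  obtain ⟨⟨hIsub, hIcard⟩, ⟨hJsub, hJcard⟩, h0, hcr⟩ := h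
  have hI : ∀ c ∈ I, c ≤ k - 2 := fun c hc => (Finset.mem_Icc.mp (hIsub hc)).2
  have hJ : ∀ c ∈ J, c ≤ k - 2 := fun c hc => (Finset.mem_Icc.mp (hJsub hc)).2
  rw [phi, Finset.card_union_of_disjoint (AB_disj ht hk hI hJ),
    Finset.card_image_of_injOn (injI ht hk hI), Finset.card_image_of_injOn (injJ ht hk hJ),
    hIcard, hJcard]

lemma phi_mem (ht : 3 ≤ t) (hk : 3 ≤ k) {a b : ℕ} (x : ZMod N) {I J : Finset ℕ}
    (h : (I, J) ∈ DD k a b) :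
    Nonempty ((SimpleGraph.induce (↑(phi t k x I J)) (GA' t k)) ≃g
      completeBipartiteGraph (Fin a) (Fin b)) := by
  classical
  rw [mem_DD] at h
  obtain ⟨⟨hIsub, hIcard⟩, ⟨hJsub, hJcard⟩, h0, hcr⟩ := h
  have hI : ∀ c ∈ I, c ≤ k - 2 := fun c hc => (Finset.mem_Icc.mp (hIsub hc)).2
  have hJ : ∀ c ∈ J, c ≤ k - 2 := fun c hc => (Finset.mem_Icc.mp (hJsub hc)).2
  set A := I.image (fun c => x + ((c * t : ℕ) : ZMod N)) with hA
  set B := J.image (fun c => x + ((c * t + 1 : ℕ) : ZMod N)) with hB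
  have hABdisj := AB_disj (x := x) ht hk hI hJ
  have hdisj : Disjoint (↑A : Set (ZMod N)) ↑B := Finset.disjoint_coe.mpr hABdisj
  have hAcard : A.card = a := by
    rw [hA, Finset.card_image_of_injOn (injI ht hk hI), hIcard]
  have hBcard : B.card = b := by
    rw [hB, Finset.card_image_of_injOn (injJ ht hk hJ), hJcard]
  have hcoe : (↑(phi t k x I J) : Set (ZMod N)) = ↑A ∪ ↑B := by
    rw [phi, Finset.coe_union]
  have eA : {w // w ∈ A} ≃ Fin a := Finset.equivFinOfCardEq hAcard
  have eB : {w // w ∈ B} ≃ Fin b := Finset.equivFinOfCardEq hBcard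
  set e : ↥(↑(phi t k x I J) : Set (ZMod N)) ≃ (Fin a) ⊕ (Fin b) :=
    (Equiv.setCongr hcoe).trans ((Equiv.Set.union hdisj).trans (Equiv.sumCongr eA eB)) with he
  have hmem : ∀ u : ↥(↑(phi t k x I J) : Set (ZMod N)), (↑u ∈ A) ∨ (↑u ∈ B) := by
    intro u
    have h2 := (Set.ext_iff.mp hcoe ↑u).mp u.2
    simpa using h2
  have hleft : ∀ u, ((e u).isLeft ↔ ↑u ∈ A) := by
    intro u
    rw [he]
    simp only [Equiv.trans_apply]
    by_cases hu : (↑u : ZMod N) ∈ A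
    · rw [Equiv.Set.union_apply_left hdisj (a := Equiv.setCongr hcoe u) (by exact hu)]
      simpa using hu
    · have hu' : (↑u : ZMod N) ∈ B := (hmem u).resolve_left hu
      rw [Equiv.Set.union_apply_right hdisj (a := Equiv.setCongr hcoe u) (by exact hu')]
      simpa using hu
  have hright : ∀ u, ((e u).isRight ↔ ↑u ∈ B) := by
    intro u
    rw [← Sum.not_isLeft, hleft]
    constructor
    · intro hna; exact (hmem u).resolve_left hna
    · intro hb hA'; exact Finset.disjoint_left.mp hABdisj hA' hb
  refine ⟨{ toEquiv := e, map_rel_iff' := ?_ }⟩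
  intro u v
  rw [completeBipartiteGraph_adj]
  have hRHS : (SimpleGraph.induce (↑(phi t k x I J)) (GA' t k)).Adj u v ↔
      (GA' t k).Adj ↑u ↑v := Iff.rfl
  rw [hRHS]
  constructor
  · rintro (⟨h1, h2⟩ | ⟨h1, h2⟩)
    · exact adjAB ht hk hJ hcr _ ((hleft u).mp h1) _ ((hright v).mp h2)
    · exact (adjAB ht hk hJ hcr _ ((hleft v).mp h2) _ ((hright u).mp h1)).symm
  · intro hadj
    rcases hmem u with h1 | h1 <;> rcases hmem v with h2 | h2
    · exact absurd hadj (nonadjA ht hk hI _ h1 _ h2)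
    · exact Or.inl ⟨(hleft u).mpr h1, (hright v).mpr h2⟩
    · exact Or.inr ⟨(hright u).mpr h1, (hleft v).mpr h2⟩
    · exact absurd hadj (nonadjB ht hk hJ _ h1 _ h2)

lemma mod_helper (ht : 3 ≤ t) (c d : ℕ) : (c * t + (d * t + 1)) % t = 1 % t := by
  have h1 : c * t + (d * t + 1) = (c + d) * t + 1 := by ring
  rw [h1, Nat.mul_comm, Nat.mul_add_mod]

lemma backward (ht : 3 ≤ t) (hk : 3 ≤ k) {a b : ℕ} (ha : 0 < a) (hb : 0 < b)
    {S : Finset (ZMod N)}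
    (h : Nonempty ((SimpleGraph.induce (↑S) (GA' t k)) ≃g
      completeBipartiteGraph (Fin a) (Fin b))) :
    ∃ x I J, (I, J) ∈ DD k a b ∧ phi t k x I J = S := by
  classical
  obtain ⟨e⟩ := h
  set gA : Fin a → ZMod N := fun i => ↑(e.symm (Sum.inl i)) with hgA
  set gB : Fin b → ZMod N := fun j => ↑(e.symm (Sum.inr j)) with hgB
  set A : Finset (ZMod N) := Finset.image gA Finset.univ with hA
  set B : Finset (ZMod N) := Finset.image gB Finset.univ with hB
  have hgAinj : Function.Injective gA := by
    intro i i' hii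
    have h2 : e.symm (Sum.inl i) = e.symm (Sum.inl i') := Subtype.ext hii
    have h3 := e.symm.toEquiv.injective h2
    exact Sum.inl_injective h3
  have hgBinj : Function.Injective gB := by
    intro i i' hii
    have h2 : e.symm (Sum.inr i) = e.symm (Sum.inr i') := Subtype.ext hii
    have h3 := e.symm.toEquiv.injective h2
    exact Sum.inr_injective h3
  have hAcard : A.card = a := by
    rw [hA, Finset.card_image_of_injective _ hgAinj, Finset.card_univ, Fintype.card_fin]
  have hBcard : B.card = b := by
    rw [hB, Finset.card_image_of_injective _ hgBinj, Finset.card_univ, Fintype.card_fin]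
  have hAS : ∀ w ∈ A, w ∈ S := by
    intro w hw
    rw [hA, Finset.mem_image] at hw
    obtain ⟨i, _, rfl⟩ := hw
    exact Finset.mem_coe.mp (e.symm (Sum.inl i)).2
  have hBS : ∀ w ∈ B, w ∈ S := by
    intro w hw
    rw [hB, Finset.mem_image] at hw
    obtain ⟨j, _, rfl⟩ := hw
    exact Finset.mem_coe.mp (e.symm (Sum.inr j)).2
  have hSAB : ∀ w ∈ S, w ∈ A ∨ w ∈ B := by
    intro w hw
    rcases hsum : e ⟨w, Finset.mem_coe.mpr hw⟩ with i | j
    · left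
      rw [hA, Finset.mem_image]
      refine ⟨i, Finset.mem_univ _, ?_⟩
      have h5 : e.symm (Sum.inl i) = ⟨w, Finset.mem_coe.mpr hw⟩ := by
        rw [← hsum]; exact e.toEquiv.symm_apply_apply _
      exact congrArg Subtype.val h5
    · right
      rw [hB, Finset.mem_image]
      refine ⟨j, Finset.mem_univ _, ?_⟩
      have h5 : e.symm (Sum.inr j) = ⟨w, Finset.mem_coe.mpr hw⟩ := by
        rw [← hsum]; exact e.toEquiv.symm_apply_apply _
      exact congrArg Subtype.val h5
  have hadjAB : ∀ u ∈ A, ∀ v ∈ B, (GA' t k).Adj u v := by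
    intro u hu v hv
    rw [hA, Finset.mem_image] at hu
    rw [hB, Finset.mem_image] at hv
    obtain ⟨i, _, rfl⟩ := hu
    obtain ⟨j, _, rfl⟩ := hv
    have h2 : (completeBipartiteGraph (Fin a) (Fin b)).Adj (Sum.inl i) (Sum.inr j) := by simp
    have h3 := e.symm.map_rel_iff.mpr h2
    exact h3
  have hnonA : ∀ u ∈ A, ∀ u' ∈ A, ¬ (GA' t k).Adj u u' := by
    intro u hu u' hu'
    rw [hA, Finset.mem_image] at hu hu'
    obtain ⟨i, _, rfl⟩ := hu
    obtain ⟨i', _, rfl⟩ := hu'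
    intro hadj
    have h3 := e.symm.map_rel_iff.mp (show (SimpleGraph.induce (↑S) (GA' t k)).Adj
      (e.symm (Sum.inl i)) (e.symm (Sum.inl i')) from hadj)
    simp at h3
  have hnonB : ∀ v ∈ B, ∀ v' ∈ B, ¬ (GA' t k).Adj v v' := by
    intro v hv v' hv'
    rw [hB, Finset.mem_image] at hv hv'
    obtain ⟨j, _, rfl⟩ := hv
    obtain ⟨j', _, rfl⟩ := hv'
    intro hadj
    have h3 := e.symm.map_rel_iff.mp (show (SimpleGraph.induce (↑S) (GA' t k)).Adj
      (e.symm (Sum.inr j)) (e.symm (Sum.inr j')) from hadj)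
    simp at h3
  -- anchor
  have hv0 : gB ⟨0, hb⟩ ∈ B := by rw [hB]; exact Finset.mem_image_of_mem _ (Finset.mem_univ _)
  set v0 : ZMod N := gB ⟨0, hb⟩ with hv0def
  have hAne : A.Nonempty := ⟨gA ⟨0, ha⟩, by rw [hA]; exact Finset.mem_image_of_mem _ (Finset.mem_univ _)⟩
  obtain ⟨x, hxA, hxmax⟩ := Finset.exists_max_image A (fun u => EM t u v0) hAne
  set p : ℕ := EM t x v0 with hp
  have specx := EM_spec ht hk (hadjAB x hxA v0 hv0)
  have fA : ∀ u ∈ A, (EM t u v0 ≤ p ∧ 1 ≤ EM t u v0 ∧ EM t u v0 ≤ k - 2 ∧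
      u = x + ((((p - EM t u v0) * t : ℕ)) : ZMod N)) := by
    intro u hu
    have specu := EM_spec ht hk (hadjAB u hu v0 hv0)
    have hle : EM t u v0 ≤ p := hxmax u hu
    refine ⟨hle, specu.1, specu.2.1, ?_⟩
    set q := EM t u v0 with hq
    have hid : (p - q) * t + (q * t + 1) = p * t + 1 := by
      have h1 : (p - q) * t = p * t - q * t := Nat.sub_mul _ _ _
      have h2 : q * t ≤ p * t := Nat.mul_le_mul_right _ hle
      omega
    have heq : u + ((q * t + 1 : ℕ) : ZMod N) = x + (((p - q) * t : ℕ) : ZMod N) + ((q * t + 1 : ℕ) : ZMod N) := by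
      rw [add_assoc, ← Nat.cast_add, hid, ← specu.2.2, ← specx.2.2]
    have := add_right_cancel heq
    rw [this]
  have fB : ∀ v ∈ B, (1 ≤ EM t x v ∧ EM t x v ≤ k - 2 ∧
      v = x + ((EM t x v * t + 1 : ℕ) : ZMod N)) := by
    intro v hv
    exact EM_spec ht hk (hadjAB x hxA v hv)
  have key : ∀ u ∈ A, ∀ v ∈ B, EM t x v = EM t u v + (p - EM t u v0) := by
    intro u hu v hv
    have specu := EM_spec ht hk (hadjAB u hu v hv)
    have hfa := fA u hu
    have hfb := fB v hv
    set q := EM t u v0 with hq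
    set m := EM t u v with hm
    set j := EM t x v with hj
    have heq : ((j * t + 1 : ℕ) : ZMod N) = (((p - q) * t + (m * t + 1) : ℕ) : ZMod N) := by
      have h1 : x + ((j * t + 1 : ℕ) : ZMod N) = v := hfb.2.2.symm
      have h2 : v = u + ((m * t + 1 : ℕ) : ZMod N) := specu.2.2
      rw [h2, hfa.2.2.2, add_assoc, ← Nat.cast_add] at h1
      exact (add_right_inj x).mp h1
    have hnat : j * t + 1 = (p - q) * t + (m * t + 1) := by
      apply cast_inj_2n ht _ _ _ heq
      · have := mt_lt (t := t) hk hfb.2.1; omega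
      · have h1 := dt_lt (t := t) hk (show p - q ≤ k - 2 by omega)
        have h2 := mt_lt (t := t) hk specu.2.1
        omega
      · rw [Nat.mul_comm, Nat.mul_add_mod, mod_helper ht]
    have h1 : ((p - q) + m) * t = (p-q) * t + m * t := Nat.add_mul _ _ _
    have h2 : j * t = ((p - q) + m) * t := by omega
    have := Nat.eq_of_mul_eq_mul_right (show 0 < t by omega) h2
    omega
  set I : Finset ℕ := A.image (fun u => p - EM t u v0) with hI
  set J : Finset ℕ := B.image (fun v => EM t x v) with hJ
  refine ⟨x, I, J, ?_, ?_⟩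
  · rw [mem_DD]
    refine ⟨⟨?_, ?_⟩, ⟨?_, ?_⟩, ?_, ?_⟩
    · intro c hc
      rw [hI, Finset.mem_image] at hc
      obtain ⟨u, hu, rfl⟩ := hc
      have := fA u hu
      rw [Finset.mem_Icc]
      have hple := specx.2.1
      omega
    · rw [hI]
      rw [Finset.card_image_of_injOn, hAcard]
      intro u hu u' hu' huu
      have h1 := (fA u (by exact hu)).2.2.2
      have h2 := (fA u' (by exact hu')).2.2.2
      rw [h1, h2]
      simp only at huu
      rw [huu]
    · intro c hc
      rw [hJ, Finset.mem_image] at hc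
      obtain ⟨v, hv, rfl⟩ := hc
      have := fB v hv
      rw [Finset.mem_Icc]
      omega
    · rw [hJ]
      rw [Finset.card_image_of_injOn, hBcard]
      intro v hv v' hv' hvv
      have h1 := (fB v (by exact hv)).2.2
      have h2 := (fB v' (by exact hv')).2.2
      rw [h1, h2]
      simp only at hvv
      rw [hvv]
    · rw [hI, Finset.mem_image]
      exact ⟨x, hxA, by omega⟩
    · intro i hi j hj
      rw [hI, Finset.mem_image] at hi
      rw [hJ, Finset.mem_image] at hj
      obtain ⟨u, hu, rfl⟩ := hi
      obtain ⟨v, hv, rfl⟩ := hj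
      have hkey := key u hu v hv
      have := (EM_spec ht hk (hadjAB u hu v hv)).1
      omega
  · rw [phi]
    have hIA : I.image (fun c => x + ((c * t : ℕ) : ZMod N)) = A := by
      rw [hI, Finset.image_image]
      have : A.image ((fun c => x + ((c * t : ℕ) : ZMod N)) ∘ (fun u => p - EM t u v0)) = A.image id := by
        apply Finset.image_congr
        intro u hu
        simp only [Function.comp_apply, id_eq]
        exact ((fA u hu).2.2.2).symm
      rw [this, Finset.image_id]
    have hJB : J.image (fun c => x + ((c * t + 1 : ℕ) : ZMod N)) = B := by
      rw [hJ, Finset.image_image]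
      have : B.image ((fun c => x + ((c * t + 1 : ℕ) : ZMod N)) ∘ (fun v => EM t x v)) = B.image id := by
        apply Finset.image_congr
        intro v hv
        simp only [Function.comp_apply, id_eq]
        exact ((fB v hv).2.2).symm
      rw [this, Finset.image_id]
    rw [hIA, hJB]
    ext w
    rw [Finset.mem_union]
    constructor
    · rintro (hw | hw)
      · exact hAS w hw
      · exact hBS w hw
    · exact hSAB w

variable (t k) in
def AA (x : ZMod N) (I : Finset ℕ) : Finset (ZMod N) :=
  I.image (fun c => x + ((c * t : ℕ) : ZMod N))

variable (t k) in
def BS (x : ZMod N) (J : Finset ℕ) : Finset (ZMod N) :=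
  J.image (fun c => x + ((c * t + 1 : ℕ) : ZMod N))

lemma phi_eq (x : ZMod N) (I J : Finset ℕ) : phi t k x I J = AA t k x I ∪ BS t k x J := rfl

open scoped Classical in
lemma part_filterA (ht : 3 ≤ t) (hk : 3 ≤ k) {x : ZMod N} {I J : Finset ℕ}
    (hIb : ∀ c ∈ I, c ≤ k-2) (hJb : ∀ c ∈ J, c ≤ k-2) (hcr : ∀ i ∈ I, ∀ j ∈ J, i < j)
    {u : ZMod N} (hu : u ∈ AA t k x I) :
    AA t k x I = (phi t k x I J).filter (fun w => ¬ (GA' t k).Adj u w) := by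
  ext w
  rw [Finset.mem_filter, phi_eq, Finset.mem_union]
  constructor
  · intro hw
    exact ⟨Or.inl hw, nonadjA ht hk hIb u hu w hw⟩
  · rintro ⟨hw | hw, hna⟩
    · exact hw
    · exact absurd (adjAB ht hk hJb hcr u hu w hw) hna

open scoped Classical in
lemma part_filterB (ht : 3 ≤ t) (hk : 3 ≤ k) {x : ZMod N} {I J : Finset ℕ}
    (hIb : ∀ c ∈ I, c ≤ k-2) (hJb : ∀ c ∈ J, c ≤ k-2) (hcr : ∀ i ∈ I, ∀ j ∈ J, i < j)
    {v : ZMod N} (hv : v ∈ BS t k x J) :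
    BS t k x J = (phi t k x I J).filter (fun w => ¬ (GA' t k).Adj v w) := by
  ext w
  rw [Finset.mem_filter, phi_eq, Finset.mem_union]
  constructor
  · intro hw
    exact ⟨Or.inr hw, nonadjB ht hk hJb v hv w hw⟩
  · rintro ⟨hw | hw, hna⟩
    · exact absurd ((adjAB ht hk hJb hcr w hw v hv).symm) hna
    · exact hw

lemma bounds_of_DD {a b : ℕ} {I J : Finset ℕ} (h : (I, J) ∈ DD k a b) :
    (∀ c ∈ I, c ≤ k-2) ∧ (∀ c ∈ J, c ≤ k-2) ∧ (∀ i ∈ I, ∀ j ∈ J, i < j) ∧ 0 ∈ I ∧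
      I.card = a ∧ J.card = b := by
  rw [mem_DD] at h
  obtain ⟨⟨hIsub, hIcard⟩, ⟨hJsub, hJcard⟩, h0, hcr⟩ := h
  exact ⟨fun c hc => (Finset.mem_Icc.mp (hIsub hc)).2,
    fun c hc => (Finset.mem_Icc.mp (hJsub hc)).2, hcr, h0, hIcard, hJcard⟩

lemma x_mem_AA (x : ZMod N) {I : Finset ℕ} (h0 : 0 ∈ I) : x ∈ AA t k x I := by
  rw [AA, Finset.mem_image]
  exact ⟨0, h0, by simp⟩

open scoped Classical in
lemma dichotomy (ht : 3 ≤ t) (hk : 3 ≤ k) {a b : ℕ} {x x' : ZMod N} {I J I' J' : Finset ℕ}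
    (hm : (I, J) ∈ DD k a b) (hm' : (I', J') ∈ DD k a b)
    (heq : phi t k x I J = phi t k x' I' J') :
    (AA t k x I = AA t k x' I' ∧ BS t k x J = BS t k x' J') ∨
    (AA t k x I = BS t k x' J' ∧ BS t k x J = AA t k x' I') := by
  obtain ⟨hIb, hJb, hcr, h0, _, _⟩ := bounds_of_DD hm
  obtain ⟨hIb', hJb', hcr', h0', _, _⟩ := bounds_of_DD hm'
  have hdisj : Disjoint (AA t k x I) (BS t k x J) := AB_disj ht hk hIb hJb
  have hdisj' : Disjoint (AA t k x' I') (BS t k x' J') := AB_disj ht hk hIb' hJb'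
  have hx0 : x ∈ AA t k x I := x_mem_AA x h0
  have hxS : x ∈ phi t k x' I' J' := by
    rw [← heq, phi_eq, Finset.mem_union]; exact Or.inl hx0
  have hBsdiff : BS t k x J = (phi t k x I J) \ (AA t k x I) := by
    rw [phi_eq, Finset.union_sdiff_cancel_left hdisj]
  rw [phi_eq, Finset.mem_union] at hxS
  rcases hxS with hx | hx
  · left
    have h1 : AA t k x I = AA t k x' I' := by
      rw [part_filterA ht hk hIb hJb hcr hx0, heq, ← part_filterA ht hk hIb' hJb' hcr' hx]
    refine ⟨h1, ?_⟩
    rw [hBsdiff, heq, h1, phi_eq, Finset.union_sdiff_cancel_left hdisj']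
  · right
    have h1 : AA t k x I = BS t k x' J' := by
      rw [part_filterA ht hk hIb hJb hcr hx0, heq, ← part_filterB ht hk hIb' hJb' hcr' hx]
    refine ⟨h1, ?_⟩
    rw [hBsdiff, heq, h1, phi_eq, Finset.union_sdiff_cancel_right hdisj']

lemma two_two_lt (hk : 3 ≤ k) {c c' : ℕ} (hc : c ≤ k-2) (hc' : c' ≤ k-2) :
    (c + c') * t < 2 * N := by
  have h1 : (c + c') * t ≤ (2 * (k-2)) * t := Nat.mul_le_mul_right _ (by omega)
  have h2 : (2 * (k-2)) * t = 2 * ((k-2) * t) := by ring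
  have h3 := dt_lt (t := t) hk (le_refl (k-2))
  omega

lemma same_parts (ht : 3 ≤ t) (hk : 3 ≤ k) {a b : ℕ} {x x' : ZMod N} {I J I' J' : Finset ℕ}
    (hm : (I, J) ∈ DD k a b) (hm' : (I', J') ∈ DD k a b)
    (hAA : AA t k x I = AA t k x' I') (hBB : BS t k x J = BS t k x' J') :
    x = x' ∧ I = I' ∧ J = J' := by
  obtain ⟨hIb, hJb, hcr, h0, _, _⟩ := bounds_of_DD hm
  obtain ⟨hIb', hJb', hcr', h0', _, _⟩ := bounds_of_DD hm'
  have hx : x ∈ AA t k x' I' := hAA ▸ x_mem_AA x h0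
  have hx' : x' ∈ AA t k x I := hAA ▸ x_mem_AA x' h0'
  rw [AA, Finset.mem_image] at hx hx'
  obtain ⟨c', hc', hce'⟩ := hx
  obtain ⟨c, hc, hce⟩ := hx'
  have hxx : x = x' := by
    have h1 : x = x + (((c + c') * t : ℕ) : ZMod N) := by
      rw [Nat.add_mul, Nat.cast_add, ← add_assoc, hce, hce']
    have h2 : (((c + c') * t : ℕ) : ZMod N) = ((0 : ℕ) : ZMod N) := by
      have := h1.symm
      rw [add_eq_left] at this
      rw [this]; simp
    have h3 := cast_inj_2n ht (two_two_lt hk (hIb c hc) (hIb' c' hc')) (by omega)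
      (by rw [Nat.mul_mod_left, Nat.zero_mod]) h2
    have hc0 : c + c' = 0 := by
      rcases Nat.eq_zero_or_pos (c + c') with h | h
      · exact h
      · exfalso
        have : 1 * t ≤ (c + c') * t := Nat.mul_le_mul_right _ h
        omega
    rw [← hce]
    have : c = 0 := by omega
    rw [this]; simp
  subst hxx
  have hIeq : I = I' := by
    ext c0
    constructor
    · intro hc0
      have : x + ((c0 * t : ℕ) : ZMod N) ∈ AA t k x I' := by
        rw [← hAA, AA]; exact Finset.mem_image_of_mem _ hc0
      rw [AA, Finset.mem_image] at this
      obtain ⟨c1, hc1, hc1e⟩ := this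
      have := cast_inj_n (dt_lt hk (hIb' c1 hc1)) (dt_lt hk (hIb c0 hc0))
        ((add_right_inj x).mp hc1e)
      have : c1 = c0 := Nat.eq_of_mul_eq_mul_right (by omega) this
      rwa [← this]
    · intro hc0
      have : x + ((c0 * t : ℕ) : ZMod N) ∈ AA t k x I := by
        rw [hAA, AA]; exact Finset.mem_image_of_mem _ hc0
      rw [AA, Finset.mem_image] at this
      obtain ⟨c1, hc1, hc1e⟩ := this
      have := cast_inj_n (dt_lt hk (hIb c1 hc1)) (dt_lt hk (hIb' c0 hc0))
        ((add_right_inj x).mp hc1e)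
      have : c1 = c0 := Nat.eq_of_mul_eq_mul_right (by omega) this
      rwa [← this]
  have hJeq : J = J' := by
    ext c0
    constructor
    · intro hc0
      have : x + ((c0 * t + 1 : ℕ) : ZMod N) ∈ BS t k x J' := by
        rw [← hBB, BS]; exact Finset.mem_image_of_mem _ hc0
      rw [BS, Finset.mem_image] at this
      obtain ⟨c1, hc1, hc1e⟩ := this
      have := cast_inj_n (mt_lt hk (hJb' c1 hc1)) (mt_lt hk (hJb c0 hc0))
        ((add_right_inj x).mp hc1e)
      have : c1 = c0 := Nat.eq_of_mul_eq_mul_right (show 0 < t by omega) (by omega)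
      rwa [← this]
    · intro hc0
      have : x + ((c0 * t + 1 : ℕ) : ZMod N) ∈ BS t k x J := by
        rw [hBB, BS]; exact Finset.mem_image_of_mem _ hc0
      rw [BS, Finset.mem_image] at this
      obtain ⟨c1, hc1, hc1e⟩ := this
      have := cast_inj_n (mt_lt hk (hJb c1 hc1)) (mt_lt hk (hJb' c0 hc0))
        ((add_right_inj x).mp hc1e)
      have : c1 = c0 := Nat.eq_of_mul_eq_mul_right (show 0 < t by omega) (by omega)
      rwa [← this]
  exact ⟨rfl, hIeq, hJeq⟩

lemma sigma_rep (ht : 3 ≤ t) (hk : 3 ≤ k) {a b : ℕ} (hb : 0 < b) {x : ZMod N}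
    {I J : Finset ℕ} (hm : (I, J) ∈ DD k a b) :
    ∃ x' I' J', (I', J') ∈ DD k b a ∧ phi t k x' I' J' = phi t k x I J ∧ x' ≠ x ∧
      AA t k x' I' = BS t k x J ∧ BS t k x' J' = AA t k x I := by
  obtain ⟨hIb, hJb, hcr, h0, hIcard, hJcard⟩ := bounds_of_DD hm
  have hJne : J.Nonempty := by
    rw [← Finset.card_pos, hJcard]; exact hb
  set μ := J.min' hJne with hμ
  have hμJ : μ ∈ J := Finset.min'_mem _ _
  have hμle : ∀ j ∈ J, μ ≤ j := fun j hj => Finset.min'_le _ _ hj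
  have hμ1 : 1 ≤ μ := hcr 0 h0 μ hμJ
  have hμk : μ ≤ k - 2 := hJb μ hμJ
  set x' : ZMod N := x + ((μ * t + 1 : ℕ) : ZMod N) with hx'
  set I' : Finset ℕ := J.image (fun c => c - μ) with hI'
  set J' : Finset ℕ := I.image (fun c => c + (k-1) - μ) with hJ'
  have hAA' : AA t k x' I' = BS t k x J := by
    rw [AA, hI', Finset.image_image]
    apply Finset.image_congr
    intro c hc
    simp only [Function.comp_apply]
    rw [hx', add_assoc, ← Nat.cast_add]
    congr 2
    have h1 : (c - μ) * t = c * t - μ * t := Nat.sub_mul _ _ _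
    have h2 : μ * t ≤ c * t := Nat.mul_le_mul_right _ (hμle c hc)
    omega
  have hBS' : BS t k x' J' = AA t k x I := by
    rw [BS, hJ', Finset.image_image]
    apply Finset.image_congr
    intro c hc
    simp only [Function.comp_apply]
    rw [hx', add_assoc, ← Nat.cast_add]
    have hnat : μ * t + 1 + ((c + (k-1) - μ) * t + 1) = c * t + N := by
      have hd : c + (k-1) - μ + μ = c + (k-1) := by omega
      have h1 : (c + (k-1) - μ + μ) * t = (c + (k-1) - μ) * t + μ * t := Nat.add_mul _ _ _
      have h2 : (c + (k-1)) * t = c * t + (k-1) * t := Nat.add_mul _ _ _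
      have h3 : (k-1) * t = t * (k-1) := Nat.mul_comm _ _
      rw [hd] at h1
      omega
    rw [hnat, Nat.cast_add, ZMod.natCast_self, add_zero]
  refine ⟨x', I', J', ?_, ?_, ?_, hAA', hBS'⟩
  · rw [mem_DD]
    refine ⟨⟨?_, ?_⟩, ⟨?_, ?_⟩, ?_, ?_⟩
    · intro c hc
      rw [hI', Finset.mem_image] at hc
      obtain ⟨c0, hc0, rfl⟩ := hc
      have := hJb c0 hc0
      rw [Finset.mem_Icc]; omega
    · rw [hI', Finset.card_image_of_injOn, hJcard]
      intro c1 h1 c2 h2 hcc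
      have := hμle c1 h1
      have := hμle c2 h2
      simp only at hcc
      omega
    · intro c hc
      rw [hJ', Finset.mem_image] at hc
      obtain ⟨c0, hc0, rfl⟩ := hc
      have h1 := hIb c0 hc0
      have h2 := hcr c0 hc0 μ hμJ
      rw [Finset.mem_Icc]; omega
    · rw [hJ', Finset.card_image_of_injOn, hIcard]
      intro c1 h1 c2 h2 hcc
      have := hIb c1 h1
      have := hIb c2 h2
      simp only at hcc
      omega
    · rw [hI', Finset.mem_image]
      exact ⟨μ, hμJ, by omega⟩
    · intro i hi j hj
      rw [hI', Finset.mem_image] at hi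
      rw [hJ', Finset.mem_image] at hj
      obtain ⟨c1, hc1, rfl⟩ := hi
      obtain ⟨c2, hc2, rfl⟩ := hj
      have h1 := hJb c1 hc1
      have h2 := hμle c1 hc1
      omega
  · rw [phi_eq, phi_eq, hAA', hBS', Finset.union_comm]
  · rw [hx']
    intro hcon
    rw [add_eq_left] at hcon
    have := cast_inj_n (mt_lt hk hμk) (show (0:ℕ) < N by omega) (by rw [hcon]; simp)
    omega

lemma lower_subset {U X Y : Finset ℕ}
    (hXU : X ⊆ U) (hYU : Y ⊆ U)
    (hXc : ∀ v ∈ U, ∀ u ∈ X, v ≤ u → v ∈ X) (hYc : ∀ v ∈ U, ∀ u ∈ Y, v ≤ u → v ∈ Y)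
    (hcard : X.card ≤ Y.card) : X ⊆ Y := by
  intro u hu
  by_contra hun
  have hYX : Y ⊆ X.erase u := by
    intro y hy
    have hyu : y < u := by
      rcases le_or_gt u y with h | h
      · exact absurd (hYc u (hXU hu) y hy h) hun
      · exact h
    rw [Finset.mem_erase]
    exact ⟨by omega, hXc y (hYU hy) u hu (le_of_lt hyu)⟩
  have h1 := Finset.card_le_card hYX
  have h2 := Finset.card_erase_of_mem hu
  have h3 : 0 < X.card := Finset.card_pos.mpr ⟨u, hu⟩
  omega

lemma lower_unique {U X Y : Finset ℕ}
    (hXU : X ⊆ U) (hYU : Y ⊆ U)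
    (hXc : ∀ v ∈ U, ∀ u ∈ X, v ≤ u → v ∈ X) (hYc : ∀ v ∈ U, ∀ u ∈ Y, v ≤ u → v ∈ Y)
    (hcard : X.card = Y.card) : X = Y :=
  Finset.eq_of_subset_of_card_le (lower_subset hXU hYU hXc hYc (le_of_eq hcard))
    (ge_of_eq hcard)

lemma card_filter_lt_emb {U : Finset ℕ} {m : ℕ} (h : U.card = m) (i : Fin m) :
    (U.filter (fun u => u < U.orderEmbOfFin h i)).card = i := by
  have himg : U.filter (fun u => u < U.orderEmbOfFin h i) =
      (Finset.univ.filter (fun j : Fin m => j < i)).image (U.orderEmbOfFin h) := by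
    ext u
    simp only [Finset.mem_filter, Finset.mem_image, Finset.mem_univ, true_and]
    constructor
    · rintro ⟨hu, hlt⟩
      have hrange : u ∈ Set.range (U.orderEmbOfFin h) := by
        rw [Finset.range_orderEmbOfFin]; exact hu
      obtain ⟨j, rfl⟩ := hrange
      exact ⟨j, (OrderEmbedding.lt_iff_lt _).mp hlt, rfl⟩
    · rintro ⟨j, hj, rfl⟩
      exact ⟨Finset.orderEmbOfFin_mem _ _ _, (OrderEmbedding.lt_iff_lt _).mpr hj⟩
  rw [himg, Finset.card_image_of_injective _ (U.orderEmbOfFin h).injective]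
  have : (Finset.univ.filter (fun j : Fin m => j < i)) = Finset.Iio i := by
    ext j; simp
  rw [this, Fin.card_Iio]

lemma DD_card (hk : 3 ≤ k) {a b : ℕ} (ha : 0 < a) (hb : 0 < b) :
    (DD k a b).card = (k-2).choose (a + b - 1) := by
  classical
  have hbase : ((Icc 1 (k-2)).powersetCard (a+b-1)).card = (k-2).choose (a+b-1) := by
    rw [Finset.card_powersetCard, Nat.card_Icc]
    congr 1
  rw [← hbase]
  apply Finset.card_bij (fun p _ => (p.1 ∪ p.2).erase 0)
  · rintro ⟨I, J⟩ hp
    obtain ⟨hIb, hJb, hcr, h0, hIcard, hJcard⟩ := bounds_of_DD hp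
    have hdisjIJ : Disjoint I J := by
      rw [Finset.disjoint_left]
      intro c hcI hcJ
      exact absurd (hcr c hcI c hcJ) (lt_irrefl c)
    rw [Finset.mem_powersetCard]
    constructor
    · intro u hu
      rw [Finset.mem_erase, Finset.mem_union] at hu
      rw [Finset.mem_Icc]
      rcases hu.2 with h | h
      · exact ⟨by omega, hIb u h⟩
      · exact ⟨hcr 0 h0 u h, hJb u h⟩
    · rw [Finset.card_erase_of_mem (Finset.mem_union_left _ h0),
        Finset.card_union_of_disjoint hdisjIJ, hIcard, hJcard]
  · rintro ⟨I, J⟩ hp ⟨I', J'⟩ hp' heq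
    obtain ⟨hIb, hJb, hcr, h0, hIcard, hJcard⟩ := bounds_of_DD hp
    obtain ⟨hIb', hJb', hcr', h0', hIcard', hJcard'⟩ := bounds_of_DD hp'
    simp only at heq
    have hUeq : I ∪ J = I' ∪ J' := by
      have h1 : insert 0 ((I ∪ J).erase 0) = I ∪ J :=
        Finset.insert_erase (Finset.mem_union_left _ h0)
      have h2 : insert 0 ((I' ∪ J').erase 0) = I' ∪ J' :=
        Finset.insert_erase (Finset.mem_union_left _ h0')
      rw [← h1, ← h2, heq]
    have hIc : ∀ v ∈ I ∪ J, ∀ u ∈ I, v ≤ u → v ∈ I := by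
      intro v hv u hu hvu
      rw [Finset.mem_union] at hv
      rcases hv with h | h
      · exact h
      · exact absurd (hcr u hu v h) (by omega)
    have hIc' : ∀ v ∈ I ∪ J, ∀ u ∈ I', v ≤ u → v ∈ I' := by
      intro v hv u hu hvu
      rw [hUeq, Finset.mem_union] at hv
      rcases hv with h | h
      · exact h
      · exact absurd (hcr' u hu v h) (by omega)
    have hIeq : I = I' := by
      apply lower_unique (U := I ∪ J) Finset.subset_union_left
        (by rw [hUeq]; exact Finset.subset_union_left) hIc hIc'
      omega
    have hJeq : J = J' := by
      have hdisjIJ : Disjoint I J := by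
        rw [Finset.disjoint_left]
        intro c hcI hcJ
        exact absurd (hcr c hcI c hcJ) (lt_irrefl c)
      have hdisjIJ' : Disjoint I' J' := by
        rw [Finset.disjoint_left]
        intro c hcI hcJ
        exact absurd (hcr' c hcI c hcJ) (lt_irrefl c)
      have e1 : J = (I ∪ J) \ I := (Finset.union_sdiff_cancel_left hdisjIJ).symm
      have e2 : J' = (I' ∪ J') \ I' := (Finset.union_sdiff_cancel_left hdisjIJ').symm
      rw [e1, e2, hUeq, hIeq]
    rw [Prod.ext_iff]
    exact ⟨hIeq, hJeq⟩
  · intro T hT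
    rw [Finset.mem_powersetCard] at hT
    obtain ⟨hTsub, hTcard⟩ := hT
    have h0T : 0 ∉ T := by
      intro h
      have := Finset.mem_Icc.mp (hTsub h)
      omega
    have hUcard : (insert 0 T).card = a + b := by
      rw [Finset.card_insert_of_notMem h0T, hTcard]
      omega
    set U := insert 0 T with hU
    set f := U.orderEmbOfFin hUcard with hf
    have hab : a < a + b := by omega
    set τ := f ⟨a, hab⟩ with hτ
    have hτpos : 0 < τ := by
      have h1 : f ⟨0, by omega⟩ < f ⟨a, hab⟩ := by
        rw [OrderEmbedding.lt_iff_lt]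
        exact Fin.mk_lt_mk.mpr ha
      omega
    set I := U.filter (fun u => u < τ) with hI
    have hIU : I ⊆ U := Finset.filter_subset _ _
    set J := U \ I with hJ
    have hUb : ∀ u ∈ U, u ≤ k - 2 := by
      intro u hu
      rw [hU, Finset.mem_insert] at hu
      rcases hu with rfl | hu
      · omega
      · exact (Finset.mem_Icc.mp (hTsub hu)).2
    have hIcard : I.card = a := card_filter_lt_emb hUcard ⟨a, hab⟩
    have hJcard : J.card = b := by
      rw [hJ, Finset.card_sdiff_of_subset hIU, hUcard, hIcard]
      omega
    have hJmem : ∀ u, u ∈ J ↔ u ∈ U ∧ τ ≤ u := by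
      intro u
      rw [hJ, Finset.mem_sdiff, hI, Finset.mem_filter]
      constructor
      · rintro ⟨h1, h2⟩
        refine ⟨h1, ?_⟩
        rcases le_or_gt τ u with h | h
        · exact h
        · exact absurd ⟨h1, h⟩ h2
      · rintro ⟨h1, h2⟩
        exact ⟨h1, fun hc => by omega⟩
    refine ⟨(I, J), ?_, ?_⟩
    · rw [mem_DD]
      refine ⟨⟨?_, hIcard⟩, ⟨?_, hJcard⟩, ?_, ?_⟩
      · intro u hu
        rw [hI, Finset.mem_filter] at hu
        rw [Finset.mem_Icc]
        exact ⟨by omega, hUb u hu.1⟩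
      · intro u hu
        rw [hJmem] at hu
        rw [Finset.mem_Icc]
        refine ⟨by omega, hUb u hu.1⟩
      · rw [hI, Finset.mem_filter]
        exact ⟨Finset.mem_insert_self _ _, hτpos⟩
      · intro i hi j hj
        rw [hI, Finset.mem_filter] at hi
        rw [hJmem] at hj
        omega
    · simp only
      rw [hJ, Finset.union_sdiff_of_subset hIU, hU, Finset.erase_insert h0T]
lemma cardAA (ht : 3 ≤ t) (hk : 3 ≤ k) {a b : ℕ} {x : ZMod N} {I J : Finset ℕ}
    (hm : (I, J) ∈ DD k a b) : (AA t k x I).card = a := by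
  obtain ⟨hIb, hJb, hcr, h0, hIcard, hJcard⟩ := bounds_of_DD hm
  rw [AA, Finset.card_image_of_injOn (injI ht hk hIb), hIcard]

lemma cardBS (ht : 3 ≤ t) (hk : 3 ≤ k) {a b : ℕ} {x : ZMod N} {I J : Finset ℕ}
    (hm : (I, J) ∈ DD k a b) : (BS t k x J).card = b := by
  obtain ⟨hIb, hJb, hcr, h0, hIcard, hJcard⟩ := bounds_of_DD hm
  rw [BS, Finset.card_image_of_injOn (injJ ht hk hJb), hJcard]

end rep
end aux


/-- For `t, k ≥ 3` and `0 < a ≤ b`, the number of vertex subsets of `GA(t,k)'`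
inducing a subgraph isomorphic to `K_{a,b}` is `n·C(k-2,a+b-1)` if `a ≠ b` and
`(n/2)·C(k-2,a+b-1)` if `a = b`, where `n = t(k-1)+2`. -/
theorem stmt_8 (t k a b : ℕ) (ht : 3 ≤ t) (hk : 3 ≤ k) (ha : 0 < a) (hab : a ≤ b) :
    {S : Finset (ZMod (t * (k - 1) + 2)) |
        Nonempty (SimpleGraph.induce (↑S) (GA' t k) ≃g
          completeBipartiteGraph (Fin a) (Fin b))}.ncard =
      if a = b then (t * (k - 1) + 2) * (k - 2).choose (a + b - 1) / 2
      else (t * (k - 1) + 2) * (k - 2).choose (a + b - 1) := by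
  classical
  have hb : 0 < b := lt_of_lt_of_le ha hab
  set Dfin : Finset (ZMod (t * (k - 1) + 2) × (Finset ℕ × Finset ℕ)) :=
    Finset.univ ×ˢ DD k a b with hD
  set Φ : ZMod (t * (k - 1) + 2) × (Finset ℕ × Finset ℕ) → Finset (ZMod (t * (k - 1) + 2)) :=
    fun p => phi t k p.1 p.2.1 p.2.2 with hΦ
  have hDmem : ∀ q : ZMod (t * (k - 1) + 2) × (Finset ℕ × Finset ℕ),
      q ∈ Dfin ↔ (q.2.1, q.2.2) ∈ DD k a b := by
    rintro ⟨y, K, L⟩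
    rw [hD, Finset.mem_product]
    simp
  have hset : {S : Finset (ZMod (t * (k - 1) + 2)) |
      Nonempty (SimpleGraph.induce (↑S) (GA' t k) ≃g
        completeBipartiteGraph (Fin a) (Fin b))} = ↑(Dfin.image Φ) := by
    ext S
    simp only [Set.mem_setOf_eq, Finset.coe_image, Set.mem_image, Finset.mem_coe]
    constructor
    · intro h
      obtain ⟨x, I, J, hm, hphi⟩ := backward ht hk ha hb h
      exact ⟨(x, (I, J)), (hDmem (x, (I, J))).mpr hm, hphi⟩
    · rintro ⟨⟨x, I, J⟩, hp, rfl⟩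
      exact phi_mem ht hk x ((hDmem (x, (I, J))).mp hp)
  rw [hset, Set.ncard_coe_finset]
  have hDcard : Dfin.card = (t * (k - 1) + 2) * (k-2).choose (a+b-1) := by
    rw [hD, Finset.card_product, Finset.card_univ, ZMod.card, DD_card hk ha hb]
  by_cases hab' : a = b
  · subst hab'
    rw [if_pos rfl]
    have hfib : ∀ s ∈ Dfin.image Φ, (Dfin.filter (fun p => Φ p = s)).card = 2 := by
      intro s hs
      obtain ⟨p, hp, hps⟩ := Finset.mem_image.mp hs
      obtain ⟨x, I, J⟩ := p
      have hpD : (I, J) ∈ DD k a a := (hDmem _).mp hp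
      obtain ⟨x', I', J', hm', hphi', hxne, hAA', hBS'⟩ := sigma_rep (x := x) ht hk ha hpD
      apply le_antisymm
      · by_contra hlt
        push_neg at hlt
        obtain ⟨p1, hp1, p2, hp2, p3, hp3, h12, h13, h23⟩ :=
          Finset.two_lt_card.mp hlt
        rw [Finset.mem_filter] at hp1 hp2 hp3
        obtain ⟨y1, K1, L1⟩ := p1
        obtain ⟨y2, K2, L2⟩ := p2
        obtain ⟨y3, K3, L3⟩ := p3
        have hm1 : (K1, L1) ∈ DD k a a := (hDmem _).mp hp1.1
        have hm2 : (K2, L2) ∈ DD k a a := (hDmem _).mp hp2.1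
        have hm3 : (K3, L3) ∈ DD k a a := (hDmem _).mp hp3.1
        have he21 : phi t k y2 K2 L2 = phi t k y1 K1 L1 := by
          rw [show phi t k y2 K2 L2 = Φ (y2, K2, L2) from rfl, hp2.2, ← hp1.2]
        have he31 : phi t k y3 K3 L3 = phi t k y1 K1 L1 := by
          rw [show phi t k y3 K3 L3 = Φ (y3, K3, L3) from rfl, hp3.2, ← hp1.2]
        have step : ∀ (y y' : ZMod (t * (k - 1) + 2)) (K L K' L' : Finset ℕ),
            (K, L) ∈ DD k a a → (K', L') ∈ DD k a a →
            phi t k y K L = phi t k y' K' L' →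
            (y, K, L) = ((y', K', L') : ZMod (t * (k - 1) + 2) × (Finset ℕ × Finset ℕ)) ∨
            (AA t k y K = BS t k y' L' ∧ BS t k y L = AA t k y' K') := by
          intro y y' K L K' L' hmk hmk' he
          rcases dichotomy ht hk hmk hmk' he with ⟨hA, hB⟩ | hsw
          · left
            obtain ⟨hx, hI, hJ⟩ := same_parts ht hk hmk hmk' hA hB
            rw [hx, hI, hJ]
          · right; exact hsw
        rcases step y2 y1 K2 L2 K1 L1 hm2 hm1 he21 with he | hsw2
        · exact h12 he.symm
        rcases step y3 y1 K3 L3 K1 L1 hm3 hm1 he31 with he | hsw3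
        · exact h13 he.symm
        have hA23 : AA t k y2 K2 = AA t k y3 K3 := hsw2.1.trans hsw3.1.symm
        have hB23 : BS t k y2 L2 = BS t k y3 L3 := hsw2.2.trans hsw3.2.symm
        obtain ⟨hx, hI, hJ⟩ := same_parts ht hk hm2 hm3 hA23 hB23
        exact h23 (by rw [hx, hI, hJ])
      · have hsub : ({(x, (I, J)), (x', (I', J'))} : Finset _) ⊆
            Dfin.filter (fun p => Φ p = s) := by
          intro q hq
          rw [Finset.mem_insert, Finset.mem_singleton] at hq
          rw [Finset.mem_filter]
          rcases hq with rfl | rfl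
          · exact ⟨hp, hps⟩
          · refine ⟨(hDmem _).mpr hm', ?_⟩
            show phi t k x' I' J' = s
            rw [hphi', ← hps]
        have hcard2 : ({(x, (I, J)), (x', (I', J'))} : Finset _).card = 2 :=
          Finset.card_pair (by
            intro hcon
            exact hxne (congrArg Prod.fst hcon).symm)
        calc 2 = ({(x, (I, J)), (x', (I', J'))} : Finset _).card := hcard2.symm
        _ ≤ _ := Finset.card_le_card hsub
    have hsum := Finset.card_eq_sum_card_image Φ Dfin
    rw [Finset.sum_congr rfl hfib, Finset.sum_const, smul_eq_mul] at hsum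
    omega
  · rw [if_neg hab']
    rw [Finset.card_image_of_injOn, hDcard]
    rintro ⟨y1, K1, L1⟩ h1 ⟨y2, K2, L2⟩ h2 he
    rw [Finset.mem_coe] at h1 h2
    have hm1 : (K1, L1) ∈ DD k a b := (hDmem _).mp h1
    have hm2 : (K2, L2) ∈ DD k a b := (hDmem _).mp h2
    have he' : phi t k y1 K1 L1 = phi t k y2 K2 L2 := he
    rcases dichotomy ht hk hm1 hm2 he' with ⟨hA, hB⟩ | ⟨hA, hB⟩
    · obtain ⟨hx, hI, hJ⟩ := same_parts ht hk hm1 hm2 hA hB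
      rw [hx, hI, hJ]
    · exfalso
      have c1 : (AA t k y1 K1).card = a := cardAA ht hk hm1
      have c2 : (BS t k y2 L2).card = b := cardBS ht hk hm2
      rw [hA, c2] at c1
      exact hab' c1.symm
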